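/- Under Hypothesis: μ < 0, g ∈ C_b² with sup_{t∈[0,1]}|g(εt) − 1| → 0 as ε → 0, define κ_ε(t) := κ(εt) with κ(t) = g(t)t^μ and the scaled operator 𝒦^ε f(t) := ε^{−μ}[κ_ε(t)(f(t) − f(0)) + ∫_0^t (f(s) − f(t)) (d/dt)κ_ε(t−s) ds]. Then the family {𝒦^ε}_{ε∈(0,1]} is uniformly bounded (equicontinuous) from C^{α-Hld}([0,1]) to C^{γ-Hld}([0,1]), and for each f ∈ C^{α-Hld}, 𝒦^ε f converges in C^{γ-Hld} as ε → 0 to 𝒦_0 f, the operator associated with the pure Riemann–Liouville kernel t^μ. -/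

import Mathlib

open Set MeasureTheory

/-- The scaled fractional operator
`𝒦^ε f(t) = ε^{-μ}[κ_ε(t)(f t - f 0) + ∫_0^t (f s - f t) (d/dt)κ_ε(t-s) ds]`,
where `κ_ε(t) = κ(εt)` and `dκ ε` is the derivative of `t ↦ κ(εt)`. -/
noncomputable def Kop (μ : ℝ) (κ : ℝ → ℝ) (dκ : ℝ → ℝ → ℝ) (ε : ℝ)
    (f : ℝ → ℝ) (t : ℝ) : ℝ :=
  ε ^ (-μ) * (κ (ε * t) * (f t - f 0) + ∫ u in (0:ℝ)..t, (f u - f t) * dκ ε (t - u))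

/-- The limiting Riemann–Liouville operator
`𝒦_0 f(t) = t^μ (f t - f 0) + μ ∫_0^t (f s - f t) (t-s)^{μ-1} ds`. -/
noncomputable def K0op (μ : ℝ) (f : ℝ → ℝ) (t : ℝ) : ℝ :=
  t ^ μ * (f t - f 0) + μ * ∫ u in (0:ℝ)..t, (f u - f t) * (t - u) ^ (μ - 1)

set_option maxHeartbeats 1000000

open intervalIntegral
open scoped Interval

noncomputable def TopK (μ : ℝ) (h k : ℝ → ℝ) (f : ℝ → ℝ) (t : ℝ) : ℝ :=
  h t * t ^ μ * (f t - f 0) + ∫ u in (0:ℝ)..t, (f u - f t) * k (t - u)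

lemma int_sub_rpow_eval1 {r s t : ℝ} (hr : -1 < r) :
    ∫ u in s..t, (t - u) ^ r = (t - s) ^ (r + 1) / (r + 1) := by
  rw [intervalIntegral.integral_comp_sub_left (fun v => v ^ r) t, sub_self,
    integral_rpow (Or.inl hr), Real.zero_rpow (by linarith), sub_zero]

lemma int_sub_rpow_eval2 {r s t : ℝ} (hr : r ≠ -1) (h0 : 0 < t - s) (hs : 0 ≤ s) :
    ∫ u in (0:ℝ)..s, (t - u) ^ r = (t ^ (r + 1) - (t - s) ^ (r + 1)) / (r + 1) := by
  rw [intervalIntegral.integral_comp_sub_left (fun v => v ^ r) t, sub_zero,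
    integral_rpow (Or.inr ⟨hr, ?_⟩)]
  rw [mem_uIcc]
  push_neg
  exact ⟨fun h => by linarith, fun h => by linarith⟩

lemma intervalIntegrable_sub_rpow' {r s t c : ℝ} (h : -1 < r) :
    IntervalIntegrable (fun u => (c - u) ^ r) volume s t := by
  have := (intervalIntegrable_rpow' (a := c - s) (b := c - t) h).comp_sub_left c
  simpa using this

lemma holder_continuousOn {α Cf : ℝ} (hα : 0 < α) {f : ℝ → ℝ}
    (hf : ∀ s ∈ Icc (0:ℝ) 1, ∀ t ∈ Icc (0:ℝ) 1, |f t - f s| ≤ Cf * |t - s| ^ α) :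
    ContinuousOn f (Icc 0 1) := by
  have hCf : 0 ≤ Cf := by
    have h01 := hf 0 (by norm_num) 1 (by norm_num)
    simp at h01
    nlinarith [abs_nonneg (f 1 - f 0)]
  intro x hx
  rw [Metric.continuousWithinAt_iff]
  intro ε hε
  refine ⟨(ε / (Cf + 1)) ^ (1/α), Real.rpow_pos_of_pos (by positivity) _, fun y hy hd => ?_⟩
  have h1 : |f y - f x| ≤ Cf * |y - x| ^ α := hf x hx y hy
  have h2 : |y - x| ^ α < ((ε / (Cf + 1)) ^ (1/α)) ^ α := by
    apply Real.rpow_lt_rpow (abs_nonneg _) _ hα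
    simpa [Real.dist_eq] using hd
  rw [← Real.rpow_mul (by positivity), one_div, inv_mul_cancel₀ hα.ne', Real.rpow_one] at h2
  calc dist (f y) (f x) = |f y - f x| := Real.dist_eq _ _
    _ ≤ Cf * |y - x| ^ α := h1
    _ ≤ Cf * (ε / (Cf + 1)) := by nlinarith [Real.rpow_nonneg (abs_nonneg (y-x)) α]
    _ < ε := by rw [mul_div_assoc']; rw [div_lt_iff₀ (by positivity)]; nlinarith

lemma integrable_main {α γ μ M Cf : ℝ} (hγ : 0 < γ)
    (hμdef : μ = γ - α) (hCf : 0 ≤ Cf) {k f : ℝ → ℝ}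
    (hk1 : ∀ x ∈ Ioc (0:ℝ) 1, |k x| ≤ M * x ^ (μ - 1))
    (hkc : ContinuousOn k (Ioc 0 1))
    (hfc : ContinuousOn f (Icc 0 1))
    (hf : ∀ s ∈ Icc (0:ℝ) 1, ∀ t ∈ Icc (0:ℝ) 1, |f t - f s| ≤ Cf * |t - s| ^ α)
    {t : ℝ} (ht : t ∈ Icc (0:ℝ) 1) :
    IntervalIntegrable (fun u => (f u - f t) * k (t - u)) volume 0 t := by
  obtain ⟨ht0, ht1⟩ := ht
  rcases eq_or_lt_of_le ht0 with rfl | ht0'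
  · exact IntervalIntegrable.refl
  rw [intervalIntegrable_iff_integrableOn_Ioc_of_le ht0]
  rw [integrableOn_Ioc_iff_integrableOn_Ioo]
  have hcont : ContinuousOn (fun u => (f u - f t) * k (t - u)) (Ioo 0 t) := by
    apply ContinuousOn.mul
    · exact ((hfc.mono (fun u hu => ⟨hu.1.le, hu.2.le.trans ht1⟩)).sub continuousOn_const)
    · exact hkc.comp (continuousOn_const.sub continuousOn_id)
        (fun u hu => ⟨by simp; linarith [hu.2], by simp; linarith [hu.1]⟩)
  apply Integrable.mono' (g := fun u => (Cf * M) * (t - u) ^ (γ - 1))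
  · have hG : IntervalIntegrable (fun u => (Cf * M) * (t - u) ^ (γ - 1)) volume 0 t :=
      (intervalIntegrable_sub_rpow' (by linarith)).const_mul _
    rw [intervalIntegrable_iff_integrableOn_Ioc_of_le ht0,
      integrableOn_Ioc_iff_integrableOn_Ioo] at hG
    exact hG
  · exact hcont.aestronglyMeasurable measurableSet_Ioo
  · rw [ae_restrict_iff' measurableSet_Ioo]
    apply Filter.Eventually.of_forall
    intro u hu
    have h1 : 0 < t - u := by linarith [hu.2]
    have h2 : t - u ≤ 1 := by linarith [hu.1]
    have hb1 : |f u - f t| ≤ Cf * (t - u) ^ α := by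
      have := hf u ⟨hu.1.le, by linarith [hu.2]⟩ t ⟨ht0, ht1⟩
      rw [abs_sub_comm]
      rwa [abs_of_pos h1] at this
    have hb2 : |k (t - u)| ≤ M * (t - u) ^ (μ - 1) := hk1 _ ⟨h1, h2⟩
    calc ‖(f u - f t) * k (t - u)‖ = |f u - f t| * |k (t - u)| := abs_mul _ _
      _ ≤ (Cf * (t - u) ^ α) * (M * (t - u) ^ (μ - 1)) := by
          apply mul_le_mul hb1 hb2 (abs_nonneg _) (by positivity)
      _ = (Cf * M) * ((t - u) ^ α * (t - u) ^ (μ - 1)) := by ring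
      _ = (Cf * M) * (t - u) ^ (γ - 1) := by
          rw [← Real.rpow_add h1, hμdef]; ring_nf

lemma cont_k_comp {k : ℝ → ℝ} (hkc : ContinuousOn k (Ioc 0 1)) {s t : ℝ}
    (hs : 0 ≤ s) (hst : s < t) (ht : t ≤ 1) :
    ContinuousOn (fun u => k (t - u)) (Icc 0 s) :=
  hkc.comp (continuousOn_const.sub continuousOn_id)
    (fun u hu => mem_Ioc.mpr ⟨by linarith [hu.2], by linarith [hu.1]⟩)

lemma integrable_reg {k f : ℝ → ℝ} (hkc : ContinuousOn k (Ioc 0 1))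
    (hfc : ContinuousOn f (Icc 0 1)) {s t : ℝ} (hs : 0 ≤ s) (hst : s < t) (ht : t ≤ 1)
    (c : ℝ) :
    IntervalIntegrable (fun u => (f u - c) * k (t - u)) volume 0 s := by
  apply ContinuousOn.intervalIntegrable
  rw [uIcc_of_le hs]
  exact ((hfc.mono (fun u hu => ⟨hu.1, by linarith [hu.2]⟩)).sub continuousOn_const).mul
    (cont_k_comp hkc hs hst ht)

lemma integrable_k_only {k : ℝ → ℝ} (hkc : ContinuousOn k (Ioc 0 1)) {s t : ℝ}
    (hs : 0 ≤ s) (hst : s < t) (ht : t ≤ 1) :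
    IntervalIntegrable (fun u => k (t - u)) volume 0 s := by
  apply ContinuousOn.intervalIntegrable
  rw [uIcc_of_le hs]
  exact cont_k_comp hkc hs hst ht

lemma masterAux {α γ μ : ℝ} (hα : α ∈ Ioo (0:ℝ) 1) (hγ : γ ∈ Ioo (0:ℝ) 1)
    (hμdef : μ = γ - α) (hμ : μ < 0) {M Cf : ℝ} (hM : 0 ≤ M) (hCf : 0 ≤ Cf)
    {h k f : ℝ → ℝ}
    (hh1 : ∀ t ∈ Icc (0:ℝ) 1, |h t| ≤ M)
    (hh2 : ∀ s ∈ Icc (0:ℝ) 1, ∀ t ∈ Icc (0:ℝ) 1, |h t - h s| ≤ M * |t - s|)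
    (hk1 : ∀ x ∈ Ioc (0:ℝ) 1, |k x| ≤ M * x ^ (μ - 1))
    (hk2 : ∀ x y : ℝ, 0 < y → y ≤ x → x ≤ 1 → |k x - k y| ≤ M * (x - y) * y ^ (μ - 2))
    (hkc : ContinuousOn k (Ioc 0 1))
    (hf : ∀ s ∈ Icc (0:ℝ) 1, ∀ t ∈ Icc (0:ℝ) 1, |f t - f s| ≤ Cf * |t - s| ^ α)
    {s t : ℝ} (hs : s ∈ Icc (0:ℝ) 1) (ht : t ∈ Icc (0:ℝ) 1) (hst : s ≤ t) :
    |TopK μ h k f t - TopK μ h k f s| ≤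
      (3 + 3/γ + 1/(1-γ) + 1/(-μ)) * (M * Cf) * (t - s) ^ γ := by
  obtain ⟨hα0, hα1⟩ := hα
  obtain ⟨hγ0, hγ1⟩ := hγ
  obtain ⟨hs0, hs1⟩ := hs
  obtain ⟨ht0, ht1⟩ := ht
  rcases eq_or_lt_of_le hst with rfl | hst'
  · simp [Real.zero_rpow hγ0.ne']
  have ht0' : 0 < t := lt_of_le_of_lt hs0 hst'
  have hfc : ContinuousOn f (Icc 0 1) := holder_continuousOn hα0 hf
  have hts0 : 0 < t - s := by linarith
  have hts1 : t - s ≤ 1 := by linarith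
  have hμ1 : -μ ≤ 1 := by rw [hμdef]; linarith
  set P := M * Cf * (t - s) ^ γ with hP
  have hP0 : 0 ≤ P := by positivity
  -- pointwise Hoelder facts
  have hfts : |f t - f s| ≤ Cf * (t - s) ^ α := by
    have := hf s ⟨hs0, hs1⟩ t ⟨ht0, ht1⟩
    rwa [abs_of_pos hts0] at this
  have hfs0 : |f s - f 0| ≤ Cf * s ^ α := by
    have := hf 0 (by norm_num) s ⟨hs0, hs1⟩
    rwa [sub_zero, abs_of_nonneg hs0] at this
  have h_tμ_le : t ^ μ ≤ (t - s) ^ μ := Real.rpow_le_rpow_of_nonpos hts0 (by linarith) hμ.le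
  have hrpow_sum : (t - s) ^ μ * (t - s) ^ α = (t - s) ^ γ := by
    rw [← Real.rpow_add hts0, hμdef]; ring_nf
  have hts_γ : t - s ≤ (t - s) ^ γ := by
    have := Real.rpow_le_rpow_of_exponent_ge hts0 hts1 hγ1.le
    rwa [Real.rpow_one] at this
  -- ==================== A part ====================
  have hT1 : |h t * t ^ μ * (f t - f s)| ≤ P := by
    calc |h t * t ^ μ * (f t - f s)| = |h t| * t ^ μ * |f t - f s| := by
          rw [abs_mul, abs_mul, abs_of_nonneg (Real.rpow_nonneg ht0 μ)]
      _ ≤ M * (t - s) ^ μ * (Cf * (t - s) ^ α) := by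
          apply mul_le_mul (mul_le_mul (hh1 t ⟨ht0, ht1⟩) h_tμ_le
            (Real.rpow_nonneg ht0 μ) hM) hfts (abs_nonneg _) (by positivity)
      _ = P := by rw [hP, ← hrpow_sum]; ring
  have hT2 : |(h t - h s) * s ^ μ * (f s - f 0)| ≤ P := by
    rcases eq_or_lt_of_le hs0 with rfl | hs0'
    · simpa [Real.zero_rpow (by linarith : μ ≠ 0)] using hP0
    · have hh2' : |h t - h s| ≤ M * (t - s) := by
        have := hh2 s ⟨hs0, hs1⟩ t ⟨ht0, ht1⟩
        rwa [abs_of_pos hts0] at this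
      calc |(h t - h s) * s ^ μ * (f s - f 0)| = |h t - h s| * s ^ μ * |f s - f 0| := by
            rw [abs_mul, abs_mul, abs_of_nonneg (Real.rpow_nonneg hs0 μ)]
        _ ≤ (M * (t - s)) * s ^ μ * (Cf * s ^ α) := by
            apply mul_le_mul (mul_le_mul hh2' le_rfl (Real.rpow_nonneg hs0 μ)
              (by positivity)) hfs0 (abs_nonneg _) (by positivity)
        _ = M * Cf * ((t - s) * (s ^ μ * s ^ α)) := by ring
        _ = M * Cf * ((t - s) * s ^ γ) := by
            rw [← Real.rpow_add hs0', hμdef]; ring_nf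
        _ ≤ M * Cf * ((t - s) ^ γ * 1) := by
            apply mul_le_mul_of_nonneg_left (mul_le_mul hts_γ
              (Real.rpow_le_one hs0 hs1 hγ0.le) (Real.rpow_nonneg hs0 γ)
              (Real.rpow_nonneg hts0.le γ)) (by positivity)
        _ = P := by rw [hP]; ring
  have hT3 : |h t * (t ^ μ - s ^ μ) * (f s - f 0)| ≤ P := by
    have habs : |h t * (t ^ μ - s ^ μ) * (f s - f 0)|
        ≤ M * |t ^ μ - s ^ μ| * (Cf * s ^ α) := by
      rw [abs_mul, abs_mul]
      exact mul_le_mul (mul_le_mul (hh1 t ⟨ht0, ht1⟩) le_rfl (abs_nonneg _) hM)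
        hfs0 (abs_nonneg _) (by positivity)
    have hkey : |t ^ μ - s ^ μ| * s ^ α ≤ (t - s) ^ γ := by
      rcases eq_or_lt_of_le hs0 with rfl | hs0'
      · rw [Real.zero_rpow hα0.ne', mul_zero]; positivity
      · have hμtμs : t ^ μ ≤ s ^ μ := Real.rpow_le_rpow_of_nonpos hs0' hst'.le hμ.le
        rw [abs_of_nonpos (by linarith), neg_sub]
        rcases le_total s (t - s) with hcase | hcase
        · have h1 : s ^ μ - t ^ μ ≤ s ^ μ := by
            nlinarith [Real.rpow_nonneg ht0 μ]
          calc (s ^ μ - t ^ μ) * s ^ α ≤ s ^ μ * s ^ α :=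
                mul_le_mul_of_nonneg_right h1 (Real.rpow_nonneg hs0 α)
            _ = s ^ γ := by rw [← Real.rpow_add hs0', hμdef]; ring_nf
            _ ≤ (t - s) ^ γ := Real.rpow_le_rpow hs0 hcase hγ0.le
        · have hcont : ContinuousOn (fun x : ℝ => x ^ μ) (Icc s t) := fun x hx =>
            (Real.continuousAt_rpow_const x μ
              (Or.inl (by intro hcon; rw [hcon] at hx; exact absurd hx.1 (by linarith)))
              ).continuousWithinAt
          obtain ⟨c, hc, hch⟩ := exists_hasDerivAt_eq_slope (fun x => x ^ μ)
            (fun x => μ * x ^ (μ - 1)) hst' hcont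
            (fun x hx => Real.hasDerivAt_rpow_const
              (Or.inl (by intro hcon; rw [hcon] at hx; exact absurd hx.1 (by linarith))))
          have hch' : μ * c ^ (μ - 1) = (t ^ μ - s ^ μ) / (t - s) := hch
          rw [eq_div_iff hts0.ne'] at hch'
          have hc1 : c ^ (μ - 1) ≤ s ^ (μ - 1) :=
            Real.rpow_le_rpow_of_nonpos hs0' hc.1.le (by linarith)
          have hcpos : 0 ≤ c ^ (μ - 1) :=
            Real.rpow_nonneg (by linarith [hc.1]) _
          have e1 : (-μ) * c ^ (μ - 1) ≤ 1 * s ^ (μ - 1) :=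
            mul_le_mul hμ1 hc1 hcpos (by norm_num)
          have e2 : (-μ) * c ^ (μ - 1) * ((t - s) * s ^ α)
              ≤ 1 * s ^ (μ - 1) * ((t - s) * s ^ α) :=
            mul_le_mul_of_nonneg_right e1 (by positivity)
          calc (s ^ μ - t ^ μ) * s ^ α = (-μ) * c ^ (μ - 1) * ((t - s) * s ^ α) := by
                rw [show s ^ μ - t ^ μ = -(t ^ μ - s ^ μ) from by ring, ← hch']; ring
            _ ≤ 1 * s ^ (μ - 1) * ((t - s) * s ^ α) := e2
            _ = (t - s) * (s ^ (μ - 1) * s ^ α) := by ring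
            _ = (t - s) * s ^ (γ - 1) := by
                rw [← Real.rpow_add hs0', hμdef]; ring_nf
            _ ≤ (t - s) * (t - s) ^ (γ - 1) := by
                apply mul_le_mul_of_nonneg_left
                  (Real.rpow_le_rpow_of_nonpos hts0 hcase (by linarith)) hts0.le
            _ = (t - s) ^ γ := by
                rw [show (t - s) * (t - s) ^ (γ - 1)
                    = (t - s) ^ (1:ℝ) * (t - s) ^ (γ - 1) from by rw [Real.rpow_one],
                  ← Real.rpow_add hts0]
                ring_nf
    calc |h t * (t ^ μ - s ^ μ) * (f s - f 0)| ≤ M * |t ^ μ - s ^ μ| * (Cf * s ^ α) := habs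
      _ = M * Cf * (|t ^ μ - s ^ μ| * s ^ α) := by ring
      _ ≤ M * Cf * (t - s) ^ γ := mul_le_mul_of_nonneg_left hkey (by positivity)
      _ = P := hP.symm
  -- ==================== integrability ====================
  have hIt : IntervalIntegrable (fun u => (f u - f t) * k (t - u)) volume 0 t :=
    integrable_main hγ0 hμdef hCf hk1 hkc hfc hf ⟨ht0, ht1⟩
  have hIs : IntervalIntegrable (fun u => (f u - f s) * k (s - u)) volume 0 s :=
    integrable_main hγ0 hμdef hCf hk1 hkc hfc hf ⟨hs0, hs1⟩
  have hsub1 : uIcc (0:ℝ) s ⊆ uIcc (0:ℝ) t := by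
    rw [uIcc_of_le hs0, uIcc_of_le ht0]; exact Icc_subset_Icc le_rfl hst
  have hsub2 : uIcc s t ⊆ uIcc (0:ℝ) t := by
    rw [uIcc_of_le hst, uIcc_of_le ht0]; exact Icc_subset_Icc hs0 le_rfl
  have hIt0s : IntervalIntegrable (fun u => (f u - f t) * k (t - u)) volume 0 s :=
    hIt.mono_set hsub1
  have hIst : IntervalIntegrable (fun u => (f u - f t) * k (t - u)) volume s t :=
    hIt.mono_set hsub2
  have hreg : IntervalIntegrable (fun u => (f u - f s) * k (t - u)) volume 0 s :=
    integrable_reg hkc hfc hs0 hst' ht1 (f s)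
  have hkonly : IntervalIntegrable (fun u => k (t - u)) volume 0 s :=
    integrable_k_only hkc hs0 hst' ht1
  have hF2 : IntervalIntegrable
      (fun u => (f u - f s) * (k (t - u) - k (s - u))) volume 0 s := by
    have e : (fun u => (f u - f s) * (k (t - u) - k (s - u)))
        = fun u => (f u - f s) * k (t - u) - (f u - f s) * k (s - u) :=
      funext fun u => mul_sub _ _ _
    rw [e]; exact hreg.sub hIs
  -- ==================== decomposition ====================
  have hsplit : (∫ u in (0:ℝ)..t, (f u - f t) * k (t - u))
      = (∫ u in (0:ℝ)..s, (f u - f t) * k (t - u))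
        + ∫ u in s..t, (f u - f t) * k (t - u) :=
    (integral_add_adjacent_intervals hIt0s hIst).symm
  have hmid : (∫ u in (0:ℝ)..s, (f u - f t) * k (t - u))
      = (∫ u in (0:ℝ)..s, (f u - f s) * k (t - u))
        + (f s - f t) * ∫ u in (0:ℝ)..s, k (t - u) := by
    rw [← intervalIntegral.integral_const_mul,
      ← intervalIntegral.integral_add hreg (hkonly.const_mul _)]
    congr 1; funext u; ring
  have hmid2 : (∫ u in (0:ℝ)..s, (f u - f s) * k (t - u))
      = (∫ u in (0:ℝ)..s, (f u - f s) * (k (t - u) - k (s - u)))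
        + ∫ u in (0:ℝ)..s, (f u - f s) * k (s - u) := by
    rw [← intervalIntegral.integral_add hF2 hIs]
    congr 1; funext u; ring
  have decomp : TopK μ h k f t - TopK μ h k f s
      = h t * t ^ μ * (f t - f s) + (h t - h s) * s ^ μ * (f s - f 0)
        + h t * (t ^ μ - s ^ μ) * (f s - f 0)
        + (∫ u in s..t, (f u - f t) * k (t - u))
        + (∫ u in (0:ℝ)..s, (f u - f s) * (k (t - u) - k (s - u)))
        + (f s - f t) * ∫ u in (0:ℝ)..s, k (t - u) := by
    simp only [TopK]
    rw [hsplit, hmid, hmid2]; ring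
  -- ==================== B part bounds ====================
  have hB1 : |∫ u in s..t, (f u - f t) * k (t - u)| ≤ (1/γ) * P := by
    have hgi : IntervalIntegrable (fun u => (M * Cf) * (t - u) ^ (γ - 1)) volume s t :=
      (intervalIntegrable_sub_rpow' (by linarith)).const_mul _
    have hpt : ∀ᵐ u ∂volume.restrict (Ι s t),
        ‖(f u - f t) * k (t - u)‖ ≤ (M * Cf) * (t - u) ^ (γ - 1) := by
      rw [ae_restrict_iff' measurableSet_uIoc]
      apply Filter.Eventually.of_forall
      intro u hu
      rw [uIoc_of_le hst'.le] at hu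
      rcases eq_or_lt_of_le hu.2 with rfl | hu2
      · simp [Real.zero_rpow (sub_ne_zero.mpr hγ1.ne)]
      · have h1 : 0 < t - u := by linarith
        have h2 : t - u ≤ 1 := by linarith [hu.1]
        have hb1 : |f u - f t| ≤ Cf * (t - u) ^ α := by
          have := hf u ⟨by linarith [hu.1], by linarith⟩ t ⟨ht0, ht1⟩
          rw [abs_sub_comm]; rwa [abs_of_pos h1] at this
        calc ‖(f u - f t) * k (t - u)‖ = |f u - f t| * |k (t - u)| := abs_mul _ _
          _ ≤ (Cf * (t - u) ^ α) * (M * (t - u) ^ (μ - 1)) :=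
              mul_le_mul hb1 (hk1 _ ⟨h1, h2⟩) (abs_nonneg _) (by positivity)
          _ = (M * Cf) * ((t - u) ^ α * (t - u) ^ (μ - 1)) := by ring
          _ = (M * Cf) * (t - u) ^ (γ - 1) := by
              rw [← Real.rpow_add h1, hμdef]; ring_nf
    have hval : ∫ u in s..t, (M * Cf) * (t - u) ^ (γ - 1) = (M * Cf) * ((t - s) ^ γ / γ) := by
      rw [intervalIntegral.integral_const_mul, int_sub_rpow_eval1 (by linarith)]
      norm_num
    calc |∫ u in s..t, (f u - f t) * k (t - u)|
        ≤ |∫ u in s..t, (M * Cf) * (t - u) ^ (γ - 1)| :=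
          intervalIntegral.norm_integral_le_abs_of_norm_le hpt hgi
      _ = (M * Cf) * ((t - s) ^ γ / γ) := by
          rw [hval, abs_of_nonneg (by positivity)]
      _ = (1/γ) * P := by rw [hP]; ring
  have hprod : (t - s) * (t - s) ^ (γ - 1) = (t - s) ^ γ := by
    rw [show (t - s) * (t - s) ^ (γ - 1) = (t - s) ^ (1:ℝ) * (t - s) ^ (γ - 1) from by
      rw [Real.rpow_one], ← Real.rpow_add hts0]
    ring_nf
  have hB2 : |∫ u in (0:ℝ)..s, (f u - f s) * (k (t - u) - k (s - u))|
      ≤ (2/γ) * P + (1/(1-γ)) * P := by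
    set m := max (2*s - t) 0 with hm
    have hm0 : 0 ≤ m := le_max_right _ _
    have hms : m ≤ s := max_le (by linarith) hs0
    have hsm : s - m ≤ t - s := by
      have := le_max_left (2*s - t) 0; rw [← hm] at this; linarith
    have hsub3 : uIcc (0:ℝ) m ⊆ uIcc (0:ℝ) s := by
      rw [uIcc_of_le hm0, uIcc_of_le hs0]; exact Icc_subset_Icc le_rfl hms
    have hsub4 : uIcc m s ⊆ uIcc (0:ℝ) s := by
      rw [uIcc_of_le hms, uIcc_of_le hs0]; exact Icc_subset_Icc hm0 le_rfl
    have hBsplit : (∫ u in (0:ℝ)..s, (f u - f s) * (k (t - u) - k (s - u)))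
        = (∫ u in (0:ℝ)..m, (f u - f s) * (k (t - u) - k (s - u)))
          + ∫ u in m..s, (f u - f s) * (k (t - u) - k (s - u)) :=
      (integral_add_adjacent_intervals (hF2.mono_set hsub3) (hF2.mono_set hsub4)).symm
    have hbound2 : |∫ u in m..s, (f u - f s) * (k (t - u) - k (s - u))| ≤ (2/γ) * P := by
      have hgi : IntervalIntegrable (fun u => (2*(M*Cf)) * (s - u) ^ (γ-1)) volume m s :=
        (intervalIntegrable_sub_rpow' (by linarith)).const_mul _
      have hpt : ∀ᵐ u ∂volume.restrict (Ι m s),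
          ‖(f u - f s) * (k (t - u) - k (s - u))‖ ≤ (2*(M*Cf)) * (s - u) ^ (γ-1) := by
        rw [ae_restrict_iff' measurableSet_uIoc]
        apply Filter.Eventually.of_forall
        intro u hu
        rw [uIoc_of_le hms] at hu
        rcases eq_or_lt_of_le hu.2 with rfl | hu2
        · simp [Real.zero_rpow (sub_ne_zero.mpr hγ1.ne)]
        · have h1 : 0 < s - u := by linarith
          have h1' : 0 < t - u := by linarith
          have h2 : t - u ≤ 1 := by linarith [hu.1, hm0]
          have h2' : s - u ≤ 1 := by linarith [hu.1, hm0]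
          have hb1 : |f u - f s| ≤ Cf * (s - u) ^ α := by
            have := hf u ⟨by linarith [hu.1, hm0], by linarith⟩ s ⟨hs0, hs1⟩
            rw [abs_sub_comm]; rwa [abs_of_pos h1] at this
          have e3 : (t - u) ^ (μ-1) ≤ (s - u) ^ (μ-1) :=
            Real.rpow_le_rpow_of_nonpos h1 (by linarith) (by linarith)
          have hkk : |k (t - u) - k (s - u)| ≤ 2*(M * (s - u) ^ (μ-1)) := by
            have e1 := hk1 _ ⟨h1', h2⟩
            have e2 := hk1 _ ⟨h1, h2'⟩
            have e4 : M * (t - u) ^ (μ-1) ≤ M * (s - u) ^ (μ-1) :=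
              mul_le_mul_of_nonneg_left e3 hM
            calc |k (t - u) - k (s - u)| ≤ |k (t - u)| + |k (s - u)| := abs_sub _ _
              _ ≤ 2*(M * (s - u) ^ (μ-1)) := by linarith
          calc ‖(f u - f s) * (k (t - u) - k (s - u))‖
              = |f u - f s| * |k (t - u) - k (s - u)| := abs_mul _ _
            _ ≤ (Cf * (s - u) ^ α) * (2*(M * (s - u) ^ (μ-1))) :=
                mul_le_mul hb1 hkk (abs_nonneg _) (by positivity)
            _ = (2*(M*Cf)) * ((s - u) ^ α * (s - u) ^ (μ-1)) := by ring
            _ = (2*(M*Cf)) * (s - u) ^ (γ-1) := by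
                rw [← Real.rpow_add h1, hμdef]; ring_nf
      have hval : ∫ u in m..s, (2*(M*Cf)) * (s - u) ^ (γ-1)
          = (2*(M*Cf)) * ((s - m) ^ γ / γ) := by
        rw [intervalIntegral.integral_const_mul, int_sub_rpow_eval1 (by linarith)]
        norm_num
      calc |∫ u in m..s, (f u - f s) * (k (t - u) - k (s - u))|
          ≤ |∫ u in m..s, (2*(M*Cf)) * (s - u) ^ (γ-1)| :=
            intervalIntegral.norm_integral_le_abs_of_norm_le hpt hgi
        _ = (2*(M*Cf)) * ((s - m) ^ γ / γ) := by
            rw [hval, abs_of_nonneg (mul_nonneg (by positivity)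
              (div_nonneg (Real.rpow_nonneg (by linarith) _) hγ0.le))]
        _ ≤ (2*(M*Cf)) * ((t - s) ^ γ / γ) := by
            exact mul_le_mul_of_nonneg_left ((div_le_div_iff_of_pos_right hγ0).mpr
              (Real.rpow_le_rpow (by linarith) hsm hγ0.le)) (by positivity)
        _ = (2/γ) * P := by rw [hP]; ring
    have hbound1 : |∫ u in (0:ℝ)..m, (f u - f s) * (k (t - u) - k (s - u))|
        ≤ (1/(1-γ)) * P := by
      rcases eq_or_lt_of_le hm0 with hm0' | hm0'
      · rw [← hm0', intervalIntegral.integral_same, abs_zero]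
        apply mul_nonneg _ hP0
        rw [one_div]
        exact le_of_lt (inv_pos.mpr (by linarith))
      · have h2st : 0 < 2*s - t := by
          by_contra hc
          push_neg at hc
          rw [hm, max_eq_right hc] at hm0'
          exact lt_irrefl 0 hm0'
        have hmm : m = 2*s - t := by rw [hm, max_eq_left h2st.le]
        have hsm' : s - m = t - s := by rw [hmm]; ring
        have hsm0 : 0 < s - m := by rw [hsm']; exact hts0
        have hgi : IntervalIntegrable (fun u => (M*Cf*(t-s)) * (s - u) ^ (γ-2)) volume 0 m := by
          apply ContinuousOn.intervalIntegrable
          rw [uIcc_of_le hm0]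
          exact continuousOn_const.mul ((continuousOn_const.sub continuousOn_id).rpow_const
            (fun v hv => Or.inl (by
              intro hcon
              rw [Pi.sub_apply, sub_eq_zero, id_eq] at hcon
              have : v ≤ m := hv.2
              linarith)))
        have hpt : ∀ᵐ u ∂volume.restrict (Ι 0 m),
            ‖(f u - f s) * (k (t - u) - k (s - u))‖ ≤ (M*Cf*(t-s)) * (s - u) ^ (γ-2) := by
          rw [ae_restrict_iff' measurableSet_uIoc]
          apply Filter.Eventually.of_forall
          intro u hu
          rw [uIoc_of_le hm0] at hu
          have h1 : 0 < s - u := by linarith [hu.2]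
          have h1' : s - u ≤ t - u := by linarith
          have h2 : t - u ≤ 1 := by linarith [hu.1]
          have hb1 : |f u - f s| ≤ Cf * (s - u) ^ α := by
            have := hf u ⟨hu.1.le, by linarith [hu.2]⟩ s ⟨hs0, hs1⟩
            rw [abs_sub_comm]; rwa [abs_of_pos h1] at this
          have hkk := hk2 (t - u) (s - u) h1 h1' h2
          rw [show t - u - (s - u) = t - s from by ring] at hkk
          calc ‖(f u - f s) * (k (t - u) - k (s - u))‖
              = |f u - f s| * |k (t - u) - k (s - u)| := abs_mul _ _
            _ ≤ (Cf * (s - u) ^ α) * (M * (t - s) * (s - u) ^ (μ-2)) :=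
                mul_le_mul hb1 hkk (abs_nonneg _) (by positivity)
            _ = (M*Cf*(t-s)) * ((s - u) ^ α * (s - u) ^ (μ-2)) := by ring
            _ = (M*Cf*(t-s)) * (s - u) ^ (γ-2) := by
                rw [← Real.rpow_add h1, hμdef]; ring_nf
        have hne : (γ - 2 : ℝ) ≠ -1 := by intro hc; exact absurd (by linarith : γ = 1) hγ1.ne
        have hval : ∫ u in (0:ℝ)..m, (M*Cf*(t-s)) * (s - u) ^ (γ-2)
            = (M*Cf*(t-s)) * ((s ^ (γ-1) - (s - m) ^ (γ-1)) / (γ-1)) := by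
          rw [intervalIntegral.integral_const_mul, int_sub_rpow_eval2 hne hsm0 hm0,
            show γ - 2 + 1 = γ - 1 from by ring]
        have hs0' : 0 < s := by linarith
        have hblt : s ^ (γ-1) ≤ (s - m) ^ (γ-1) :=
          Real.rpow_le_rpow_of_nonpos hsm0 (by linarith) (by linarith)
        have hs0γ : 0 ≤ s ^ (γ-1) := Real.rpow_nonneg hs0 _
        calc |∫ u in (0:ℝ)..m, (f u - f s) * (k (t - u) - k (s - u))|
            ≤ |∫ u in (0:ℝ)..m, (M*Cf*(t-s)) * (s - u) ^ (γ-2)| :=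
              intervalIntegral.norm_integral_le_abs_of_norm_le hpt hgi
          _ = (M*Cf*(t-s)) * (((s - m) ^ (γ-1) - s ^ (γ-1)) / (1-γ)) := by
              rw [hval, abs_mul, abs_of_nonneg (by positivity), abs_div,
                abs_of_nonpos (by linarith : s ^ (γ-1) - (s - m) ^ (γ-1) ≤ 0),
                abs_of_neg (by linarith : γ - 1 < 0), neg_sub, neg_sub]
          _ ≤ (M*Cf*(t-s)) * ((s - m) ^ (γ-1) / (1-γ)) := by
              exact mul_le_mul_of_nonneg_left ((div_le_div_iff_of_pos_right (by linarith)).mpr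
                (by linarith)) (by positivity)
          _ = (1/(1-γ)) * (M*Cf*((t - s) * (t - s) ^ (γ-1))) := by
              rw [hsm']; ring
          _ = (1/(1-γ)) * P := by rw [hprod, hP]
    rw [hBsplit]
    exact (abs_add_le _ _).trans (by linarith)
  have hB3 : |(f s - f t) * ∫ u in (0:ℝ)..s, k (t - u)| ≤ (1/(-μ)) * P := by
    have hgi : IntervalIntegrable (fun u => M * (t - u) ^ (μ - 1)) volume 0 s := by
      apply ContinuousOn.intervalIntegrable
      rw [uIcc_of_le hs0]
      exact continuousOn_const.mul ((continuousOn_const.sub continuousOn_id).rpow_const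
        (fun v hv => Or.inl (by
          intro hcon
          rw [Pi.sub_apply, sub_eq_zero, id_eq] at hcon
          have : v ≤ s := hv.2
          linarith)))
    have hpt : ∀ᵐ u ∂volume.restrict (Ι 0 s),
        ‖k (t - u)‖ ≤ M * (t - u) ^ (μ - 1) := by
      rw [ae_restrict_iff' measurableSet_uIoc]
      apply Filter.Eventually.of_forall
      intro u hu
      rw [uIoc_of_le hs0] at hu
      exact hk1 _ ⟨by linarith [hu.2], by linarith [hu.1]⟩
    have hval : ∫ u in (0:ℝ)..s, M * (t - u) ^ (μ - 1) = M * ((t ^ μ - (t - s) ^ μ) / μ) := by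
      rw [intervalIntegral.integral_const_mul,
        int_sub_rpow_eval2 (by intro hcon; exact absurd (by linarith : μ = 0) hμ.ne) hts0 hs0]
      norm_num
    have htμ0 : 0 ≤ t ^ μ := Real.rpow_nonneg ht0 μ
    have habs2 : |∫ u in (0:ℝ)..s, M * (t - u) ^ (μ - 1)| ≤ M * ((t - s) ^ μ / (-μ)) := by
      rw [hval, abs_mul, abs_of_nonneg hM, abs_div, abs_of_neg hμ,
        abs_of_nonpos (by linarith : t ^ μ - (t - s) ^ μ ≤ 0), neg_sub]
      apply mul_le_mul_of_nonneg_left _ hM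
      gcongr
      · linarith
      · linarith
    calc |(f s - f t) * ∫ u in (0:ℝ)..s, k (t - u)|
        = |f s - f t| * |∫ u in (0:ℝ)..s, k (t - u)| := abs_mul _ _
      _ ≤ (Cf * (t - s) ^ α) * (M * ((t - s) ^ μ / (-μ))) := by
          apply mul_le_mul _ ((intervalIntegral.norm_integral_le_abs_of_norm_le hpt hgi).trans habs2)
            (abs_nonneg _) (by positivity)
          rw [abs_sub_comm]; exact hfts
      _ = (1/(-μ)) * (M * Cf * ((t - s) ^ μ * (t - s) ^ α)) := by
          field_simp
      _ = (1/(-μ)) * P := by rw [hrpow_sum, hP]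
  -- ==================== conclusion ====================
  calc |TopK μ h k f t - TopK μ h k f s|
      ≤ |h t * t ^ μ * (f t - f s)| + |(h t - h s) * s ^ μ * (f s - f 0)|
        + |h t * (t ^ μ - s ^ μ) * (f s - f 0)|
        + |∫ u in s..t, (f u - f t) * k (t - u)|
        + |∫ u in (0:ℝ)..s, (f u - f s) * (k (t - u) - k (s - u))|
        + |(f s - f t) * ∫ u in (0:ℝ)..s, k (t - u)| := by
        rw [decomp]
        exact (abs_add_le _ _).trans (add_le_add ((abs_add_le _ _).trans (add_le_add
          ((abs_add_le _ _).trans (add_le_add ((abs_add_le _ _).trans (add_le_add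
          ((abs_add_le _ _).trans le_rfl) le_rfl)) le_rfl)) le_rfl)) le_rfl)
    _ ≤ P + P + P + (1/γ) * P + ((2/γ) * P + (1/(1-γ)) * P) + (1/(-μ)) * P := by
        exact add_le_add (add_le_add (add_le_add (add_le_add (add_le_add hT1 hT2) hT3)
          hB1) hB2) hB3
    _ = (3 + 3/γ + 1/(1-γ) + 1/(-μ)) * (M * Cf) * (t - s) ^ γ := by
        rw [hP]; ring

/-- symmetric version of the master estimate -/
lemma masterFull {α γ μ : ℝ} (hα : α ∈ Ioo (0:ℝ) 1) (hγ : γ ∈ Ioo (0:ℝ) 1)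
    (hμdef : μ = γ - α) (hμ : μ < 0) {M Cf : ℝ} (hM : 0 ≤ M) (hCf : 0 ≤ Cf)
    {h k f : ℝ → ℝ}
    (hh1 : ∀ t ∈ Icc (0:ℝ) 1, |h t| ≤ M)
    (hh2 : ∀ s ∈ Icc (0:ℝ) 1, ∀ t ∈ Icc (0:ℝ) 1, |h t - h s| ≤ M * |t - s|)
    (hk1 : ∀ x ∈ Ioc (0:ℝ) 1, |k x| ≤ M * x ^ (μ - 1))
    (hk2 : ∀ x y : ℝ, 0 < y → y ≤ x → x ≤ 1 → |k x - k y| ≤ M * (x - y) * y ^ (μ - 2))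
    (hkc : ContinuousOn k (Ioc 0 1))
    (hf : ∀ s ∈ Icc (0:ℝ) 1, ∀ t ∈ Icc (0:ℝ) 1, |f t - f s| ≤ Cf * |t - s| ^ α) :
    ∀ s ∈ Icc (0:ℝ) 1, ∀ t ∈ Icc (0:ℝ) 1,
      |TopK μ h k f t - TopK μ h k f s| ≤
        (3 + 3/γ + 1/(1-γ) + 1/(-μ)) * (M * Cf) * |t - s| ^ γ := by
  intro s hs t ht
  rcases le_total s t with hst | hst
  · rw [abs_of_nonneg (sub_nonneg.mpr hst)]
    exact masterAux hα hγ hμdef hμ hM hCf hh1 hh2 hk1 hk2 hkc hf hs ht hst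
  · rw [abs_sub_comm t s, abs_of_nonneg (sub_nonneg.mpr hst), abs_sub_comm]
    exact masterAux hα hγ hμdef hμ hM hCf hh1 hh2 hk1 hk2 hkc hf ht hs hst

lemma K0op_eq (μ : ℝ) (f : ℝ → ℝ) (t : ℝ) :
    K0op μ f t = TopK μ (fun _ => 1) (fun x => μ * x ^ (μ - 1)) f t := by
  simp only [K0op, TopK, one_mul]
  congr 1
  rw [← intervalIntegral.integral_const_mul]
  exact intervalIntegral.integral_congr (fun u _ => by ring)

/-- identification of the scaled operator with a `TopK` operator. -/
lemma Kop_eq {μ : ℝ} (hμ : μ < 0) {g g' κ : ℝ → ℝ} (hκ : ∀ t, κ t = g t * t ^ μ)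
    (hg' : ∀ t, HasDerivAt g (g' t) t) {dκ : ℝ → ℝ → ℝ}
    (hdκ : ∀ ε ∈ Ioc (0:ℝ) 1, ∀ t ∈ Ioc (0:ℝ) 1,
      HasDerivAt (fun u => κ (ε * u)) (dκ ε t) t)
    {ε : ℝ} (hε : ε ∈ Ioc (0:ℝ) 1) (f : ℝ → ℝ) {t : ℝ} (ht : t ∈ Icc (0:ℝ) 1) :
    Kop μ κ dκ ε f t = TopK μ (fun r => g (ε * r))
      (fun x => ε * g' (ε * x) * x ^ μ + μ * g (ε * x) * x ^ (μ - 1)) f t := by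
  obtain ⟨hε0, hε1⟩ := hε
  obtain ⟨ht0, ht1⟩ := ht
  have e1 : ε ^ (-μ) * ε ^ μ = 1 := by
    rw [← Real.rpow_add hε0]; simp
  have e2 : ε ^ (-μ) * (ε ^ (μ - 1) * ε) = 1 := by
    rw [← Real.rpow_add_one hε0.ne' (μ - 1), ← Real.rpow_add hε0]; norm_num
  simp only [Kop, TopK, mul_add]
  congr 1
  · -- boundary term
    rw [hκ (ε * t), Real.mul_rpow hε0.le ht0]
    calc ε ^ (-μ) * (g (ε * t) * (ε ^ μ * t ^ μ) * (f t - f 0))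
        = (ε ^ (-μ) * ε ^ μ) * (g (ε * t) * t ^ μ * (f t - f 0)) := by ring
      _ = g (ε * t) * t ^ μ * (f t - f 0) := by rw [e1, one_mul]
  · -- integral term
    rw [← intervalIntegral.integral_const_mul]
    apply intervalIntegral.integral_congr_ae
    have hae : ∀ᵐ (x : ℝ) ∂(volume : Measure ℝ), x ≠ t := by
      rw [ae_iff]
      simp only [ne_eq, not_not, setOf_eq_eq_singleton]
      exact Real.volume_singleton
    filter_upwards [hae] with x hxne hmem
    rw [uIoc_of_le ht0] at hmem
    have hx1 : 0 < x := hmem.1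
    have hxt : x < t := lt_of_le_of_ne hmem.2 hxne
    have hy0 : 0 < t - x := by linarith
    have hy1 : t - x ≤ 1 := by linarith
    have hεy : 0 < ε * (t - x) := by positivity
    -- compute the derivative
    have h1 : HasDerivAt (fun u : ℝ => ε * u) ε (t - x) := by
      simpa using (hasDerivAt_id (t - x)).const_mul ε
    have h2 : HasDerivAt (fun u => g (ε * u)) (g' (ε * (t - x)) * ε) (t - x) :=
      (hg' _).comp _ h1
    have h3 : HasDerivAt (fun u : ℝ => (ε * u) ^ μ)
        ((μ * (ε * (t - x)) ^ (μ - 1)) * ε) (t - x) :=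
      (Real.hasDerivAt_rpow_const (Or.inl hεy.ne')).comp _ h1
    have hform : HasDerivAt (fun u => κ (ε * u))
        (g' (ε * (t - x)) * ε * (ε * (t - x)) ^ μ
          + g (ε * (t - x)) * ((μ * (ε * (t - x)) ^ (μ - 1)) * ε)) (t - x) := by
      have hfun : (fun u => κ (ε * u)) = fun u => g (ε * u) * (ε * u) ^ μ :=
        funext fun u => hκ _
      rw [hfun]
      exact h2.mul h3
    have hdval : dκ ε (t - x)
        = g' (ε * (t - x)) * ε * (ε * (t - x)) ^ μ
          + g (ε * (t - x)) * ((μ * (ε * (t - x)) ^ (μ - 1)) * ε) :=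
      (hdκ ε ⟨hε0, hε1⟩ (t - x) ⟨hy0, hy1⟩).unique hform
    rw [hdval, Real.mul_rpow hε0.le hy0.le, Real.mul_rpow hε0.le hy0.le]
    linear_combination ((f x - f t) * ε * g' (ε * (t - x)) * (t - x) ^ μ) * e1
      + ((f x - f t) * g (ε * (t - x)) * μ * (t - x) ^ (μ - 1)) * e2

/-- difference of two `TopK`s is the `TopK` of the difference. -/
lemma TopK_sub {μ : ℝ} {h1 k1 h2 k2 f : ℝ → ℝ} {t : ℝ}
    (hi1 : IntervalIntegrable (fun u => (f u - f t) * k1 (t - u)) volume 0 t)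
    (hi2 : IntervalIntegrable (fun u => (f u - f t) * k2 (t - u)) volume 0 t) :
    TopK μ h1 k1 f t - TopK μ h2 k2 f t
      = TopK μ (fun r => h1 r - h2 r) (fun x => k1 x - k2 x) f t := by
  simp only [TopK]
  rw [show (∫ u in (0:ℝ)..t, (f u - f t) * (k1 (t - u) - k2 (t - u)))
      = ∫ u in (0:ℝ)..t, ((f u - f t) * k1 (t - u) - (f u - f t) * k2 (t - u)) from
    intervalIntegral.integral_congr (fun u _ => by ring),
    intervalIntegral.integral_sub hi1 hi2]
  ring

lemma verif {μ : ℝ} (hμ0 : μ < 0) (hμ1 : -μ ≤ 1)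
    {g g' g'' : ℝ → ℝ} {Cg : ℝ}
    (hg' : ∀ t, HasDerivAt g (g' t) t) (hg'' : ∀ t, HasDerivAt g' (g'' t) t)
    (hgb' : ∀ t, |g' t| ≤ Cg) (hgb'' : ∀ t, |g'' t| ≤ Cg)
    {ε : ℝ} (hε : ε ∈ Ioc (0:ℝ) 1) {c A : ℝ} (hA : 0 ≤ A)
    (ha : ∀ x ∈ Icc (0:ℝ) 1, |g (ε * x) - c| ≤ A) :
    (∀ t ∈ Icc (0:ℝ) 1, |g (ε * t) - c| ≤ 3*(ε*Cg + A)) ∧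
    (∀ s ∈ Icc (0:ℝ) 1, ∀ t ∈ Icc (0:ℝ) 1,
      |(g (ε*t) - c) - (g (ε*s) - c)| ≤ 3*(ε*Cg + A) * |t - s|) ∧
    (∀ x ∈ Ioc (0:ℝ) 1, |ε * g' (ε*x) * x ^ μ + μ * (g (ε*x) - c) * x ^ (μ-1)|
      ≤ 3*(ε*Cg + A) * x ^ (μ-1)) ∧
    (∀ x y : ℝ, 0 < y → y ≤ x → x ≤ 1 →
      |(ε * g' (ε*x) * x ^ μ + μ * (g (ε*x) - c) * x ^ (μ-1))
        - (ε * g' (ε*y) * y ^ μ + μ * (g (ε*y) - c) * y ^ (μ-1))|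
      ≤ 3*(ε*Cg + A) * (x - y) * y ^ (μ-2)) ∧
    ContinuousOn (fun x => ε * g' (ε*x) * x ^ μ + μ * (g (ε*x) - c) * x ^ (μ-1))
      (Ioc 0 1) := by
  obtain ⟨hε0, hε1⟩ := hε
  have hCg : 0 ≤ Cg := (abs_nonneg _).trans (hgb' 0)
  have hεCg : 0 ≤ ε * Cg := by positivity
  have hM0 : 0 ≤ 3*(ε*Cg + A) := by positivity
  refine ⟨?_, ?_, ?_, ?_, ?_⟩
  · intro t ht
    exact (ha t ht).trans (by linarith)
  · -- Lipschitz bound via mean value inequality on ℝ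
    intro s _ t _
    have key : ∀ x y : ℝ, ‖g (ε*y) - g (ε*x)‖ ≤ (ε*Cg) * ‖y - x‖ := by
      intro x y
      apply Convex.norm_image_sub_le_of_norm_hasDerivWithin_le
        (f := fun u => g (ε*u)) (f' := fun u => g' (ε*u) * ε) (s := univ)
        (fun z _ => ((hg' (ε*z)).comp z (by
          simpa using (hasDerivAt_id z).const_mul ε)).hasDerivWithinAt)
        (fun z _ => by
          rw [Real.norm_eq_abs, abs_mul, abs_of_nonneg hε0.le]
          calc |g' (ε*z)| * ε ≤ Cg * ε := mul_le_mul_of_nonneg_right (hgb' _) hε0.le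
            _ = ε * Cg := mul_comm _ _)
        convex_univ (mem_univ x) (mem_univ y)
    have := key s t
    rw [Real.norm_eq_abs, Real.norm_eq_abs] at this
    calc |(g (ε*t) - c) - (g (ε*s) - c)| = |g (ε*t) - g (ε*s)| := by ring_nf
      _ ≤ (ε*Cg) * |t - s| := this
      _ ≤ 3*(ε*Cg + A) * |t - s| := by
          apply mul_le_mul_of_nonneg_right (by linarith) (abs_nonneg _)
  · -- pointwise kernel bound
    intro x hx
    have hx0 : 0 < x := hx.1
    have hx1 : x ≤ 1 := hx.2
    have hr1 : x ^ μ ≤ x ^ (μ-1) :=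
      Real.rpow_le_rpow_of_exponent_ge hx0 hx1 (by linarith)
    have hr0 : (0:ℝ) ≤ x ^ (μ-1) := Real.rpow_nonneg hx0.le _
    have hr0' : (0:ℝ) ≤ x ^ μ := Real.rpow_nonneg hx0.le _
    have t1 : |ε * g' (ε*x) * x ^ μ| ≤ (ε*Cg) * x ^ (μ-1) := by
      rw [abs_mul, abs_mul, abs_of_nonneg hε0.le, abs_of_nonneg hr0']
      exact mul_le_mul (mul_le_mul_of_nonneg_left (hgb' _) hε0.le) hr1 hr0'
        (by positivity)
    have t2 : |μ * (g (ε*x) - c) * x ^ (μ-1)| ≤ A * x ^ (μ-1) := by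
      rw [abs_mul, abs_mul, abs_of_neg hμ0, abs_of_nonneg hr0]
      have h1 : |g (ε*x) - c| ≤ A := ha x ⟨hx0.le, hx1⟩
      have h2 : -μ * |g (ε*x) - c| ≤ 1 * A :=
        mul_le_mul hμ1 h1 (abs_nonneg _) (by norm_num)
      rw [one_mul] at h2
      exact mul_le_mul_of_nonneg_right h2 hr0
    calc |ε * g' (ε*x) * x ^ μ + μ * (g (ε*x) - c) * x ^ (μ-1)|
        ≤ |ε * g' (ε*x) * x ^ μ| + |μ * (g (ε*x) - c) * x ^ (μ-1)| := abs_add_le _ _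
      _ ≤ (ε*Cg) * x ^ (μ-1) + A * x ^ (μ-1) := add_le_add t1 t2
      _ ≤ 3*(ε*Cg + A) * x ^ (μ-1) := by nlinarith [hr0]
  · -- difference bound via mean value inequality
    intro x y hy0 hyx hx1
    set kd : ℝ → ℝ := fun ξ =>
      (ε * (g'' (ε*ξ) * ε) * ξ ^ μ + (ε * g' (ε*ξ)) * (μ * ξ ^ (μ-1)))
        + ((μ * (g' (ε*ξ) * ε)) * ξ ^ (μ-1)
            + (μ * (g (ε*ξ) - c)) * ((μ-1) * ξ ^ (μ-2))) with hkd
    have hder : ∀ ξ ∈ Icc y x, HasDerivAt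
        (fun u => ε * g' (ε*u) * u ^ μ + μ * (g (ε*u) - c) * u ^ (μ-1)) (kd ξ) ξ := by
      intro ξ hξ
      have hξ0 : 0 < ξ := lt_of_lt_of_le hy0 hξ.1
      have hl : HasDerivAt (fun u : ℝ => ε * u) ε ξ := by
        simpa using (hasDerivAt_id ξ).const_mul ε
      have d1 : HasDerivAt (fun u => ε * g' (ε*u)) (ε * (g'' (ε*ξ) * ε)) ξ :=
        (((hg'' (ε*ξ)).comp ξ hl)).const_mul ε
      have d2 : HasDerivAt (fun u : ℝ => u ^ μ) (μ * ξ ^ (μ-1)) ξ :=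
        Real.hasDerivAt_rpow_const (Or.inl hξ0.ne')
      have d3 : HasDerivAt (fun u => μ * (g (ε*u) - c)) (μ * (g' (ε*ξ) * ε)) ξ :=
        (((hg' (ε*ξ)).comp ξ hl).sub_const c).const_mul μ
      have d4 : HasDerivAt (fun u : ℝ => u ^ (μ-1)) ((μ-1) * ξ ^ (μ-2)) ξ := by
        have := Real.hasDerivAt_rpow_const (p := μ-1) (x := ξ) (Or.inl hξ0.ne')
        rwa [show μ - 1 - 1 = μ - 2 from by ring] at this
      exact (d1.mul d2).add (d3.mul d4)
    have hbound : ∀ ξ ∈ Icc y x, ‖kd ξ‖ ≤ (3*(ε*Cg + A)) * y ^ (μ-2) := by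
      intro ξ hξ
      have hξ0 : 0 < ξ := lt_of_lt_of_le hy0 hξ.1
      have hξ1 : ξ ≤ 1 := le_trans hξ.2 hx1
      have e0 : (0:ℝ) ≤ ξ ^ (μ-2) := Real.rpow_nonneg hξ0.le _
      have e1 : ξ ^ μ ≤ ξ ^ (μ-2) :=
        Real.rpow_le_rpow_of_exponent_ge hξ0 hξ1 (by linarith)
      have e2 : ξ ^ (μ-1) ≤ ξ ^ (μ-2) :=
        Real.rpow_le_rpow_of_exponent_ge hξ0 hξ1 (by linarith)
      have e3 : ξ ^ (μ-2) ≤ y ^ (μ-2) :=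
        Real.rpow_le_rpow_of_nonpos hy0 hξ.1 (by linarith)
      have hgε : |g (ε*ξ) - c| ≤ A := ha ξ ⟨hξ0.le, hξ1⟩
      have b1 : |ε * (g'' (ε*ξ) * ε) * ξ ^ μ| ≤ (ε * Cg) * ξ ^ (μ-2) := by
        rw [abs_mul, abs_mul, abs_mul, abs_of_nonneg hε0.le,
          abs_of_nonneg (Real.rpow_nonneg hξ0.le μ)]
        have q1 : |g'' (ε*ξ)| * ε ≤ Cg * 1 := mul_le_mul (hgb'' _) hε1 hε0.le hCg
        have : ε * (|g'' (ε*ξ)| * ε) ≤ ε * Cg := by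
          have := mul_le_mul_of_nonneg_left q1 hε0.le
          rwa [mul_one] at this
        exact mul_le_mul this e1 (Real.rpow_nonneg hξ0.le μ) hεCg
      have b2 : |(ε * g' (ε*ξ)) * (μ * ξ ^ (μ-1))| ≤ (ε * Cg) * ξ ^ (μ-2) := by
        rw [abs_mul, abs_mul, abs_mul, abs_of_nonneg hε0.le, abs_of_neg hμ0,
          abs_of_nonneg (Real.rpow_nonneg hξ0.le (μ-1))]
        have h5 : ε * |g' (ε*ξ)| ≤ ε * Cg := mul_le_mul_of_nonneg_left (hgb' _) hε0.le
        have h6 : -μ * ξ ^ (μ-1) ≤ 1 * ξ ^ (μ-2) := by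
          apply mul_le_mul hμ1 e2 (Real.rpow_nonneg hξ0.le _) (by norm_num)
        rw [one_mul] at h6
        exact mul_le_mul h5 h6 (mul_nonneg (by linarith) (Real.rpow_nonneg hξ0.le _)) hεCg
      have b3 : |(μ * (g' (ε*ξ) * ε)) * ξ ^ (μ-1)| ≤ (ε * Cg) * ξ ^ (μ-2) := by
        rw [abs_mul, abs_mul, abs_mul, abs_of_neg hμ0, abs_of_nonneg hε0.le,
          abs_of_nonneg (Real.rpow_nonneg hξ0.le (μ-1))]
        have h5 : -μ * (|g' (ε*ξ)| * ε) ≤ 1 * (Cg * ε) := by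
          apply mul_le_mul hμ1 (mul_le_mul_of_nonneg_right (hgb' _) hε0.le)
            (by positivity) (by norm_num)
        rw [one_mul] at h5
        calc -μ * (|g' (ε*ξ)| * ε) * ξ ^ (μ-1) ≤ (Cg * ε) * ξ ^ (μ-2) :=
              mul_le_mul h5 e2 (Real.rpow_nonneg hξ0.le _) (by positivity)
          _ = (ε * Cg) * ξ ^ (μ-2) := by ring
      have b4 : |(μ * (g (ε*ξ) - c)) * ((μ-1) * ξ ^ (μ-2))| ≤ (2*A) * ξ ^ (μ-2) := by
        rw [abs_mul, abs_mul, abs_mul, abs_of_neg hμ0,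
          abs_of_neg (by linarith : μ - 1 < 0),
          abs_of_nonneg (Real.rpow_nonneg hξ0.le (μ-2))]
        have h5 : -μ * |g (ε*ξ) - c| ≤ 1 * A :=
          mul_le_mul hμ1 hgε (abs_nonneg _) (by norm_num)
        rw [one_mul] at h5
        have h6 : -(μ-1) * ξ ^ (μ-2) ≤ 2 * ξ ^ (μ-2) :=
          mul_le_mul_of_nonneg_right (by linarith) e0
        calc -μ * |g (ε*ξ) - c| * (-(μ - 1) * ξ ^ (μ-2))
            ≤ A * (2 * ξ ^ (μ-2)) := by
              apply mul_le_mul h5 h6 (mul_nonneg (by linarith) e0) hA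
          _ = (2*A) * ξ ^ (μ-2) := by ring
      have htot : ‖kd ξ‖ ≤ (3*(ε*Cg + A)) * ξ ^ (μ-2) := by
        rw [hkd, Real.norm_eq_abs]
        calc |ε * (g'' (ε*ξ) * ε) * ξ ^ μ + (ε * g' (ε*ξ)) * (μ * ξ ^ (μ-1))
              + ((μ * (g' (ε*ξ) * ε)) * ξ ^ (μ-1)
                + (μ * (g (ε*ξ) - c)) * ((μ-1) * ξ ^ (μ-2)))|
            ≤ |ε * (g'' (ε*ξ) * ε) * ξ ^ μ| + |(ε * g' (ε*ξ)) * (μ * ξ ^ (μ-1))|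
              + (|(μ * (g' (ε*ξ) * ε)) * ξ ^ (μ-1)|
                + |(μ * (g (ε*ξ) - c)) * ((μ-1) * ξ ^ (μ-2))|) :=
              (abs_add_le _ _).trans (add_le_add (abs_add_le _ _) (abs_add_le _ _))
          _ ≤ (ε*Cg) * ξ ^ (μ-2) + (ε*Cg) * ξ ^ (μ-2)
              + ((ε*Cg) * ξ ^ (μ-2) + (2*A) * ξ ^ (μ-2)) :=
              add_le_add (add_le_add b1 b2) (add_le_add b3 b4)
          _ ≤ (3*(ε*Cg + A)) * ξ ^ (μ-2) := by nlinarith [e0]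
      exact htot.trans (mul_le_mul_of_nonneg_left e3 hM0)
    have key := Convex.norm_image_sub_le_of_norm_hasDerivWithin_le
      (f' := kd) (fun ξ hξ => (hder ξ hξ).hasDerivWithinAt) hbound
      (convex_Icc y x) (left_mem_Icc.mpr hyx) (right_mem_Icc.mpr hyx)
    rw [Real.norm_eq_abs, Real.norm_eq_abs, abs_of_nonneg (by linarith : (0:ℝ) ≤ x - y)]
      at key
    calc |(ε * g' (ε*x) * x ^ μ + μ * (g (ε*x) - c) * x ^ (μ-1))
          - (ε * g' (ε*y) * y ^ μ + μ * (g (ε*y) - c) * y ^ (μ-1))|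
        ≤ 3*(ε*Cg + A) * y ^ (μ-2) * (x - y) := key
      _ = 3*(ε*Cg + A) * (x - y) * y ^ (μ-2) := by ring
  · -- continuity
    have hgc : Continuous g := continuous_iff_continuousAt.mpr fun t => (hg' t).continuousAt
    have hg'c : Continuous g' := continuous_iff_continuousAt.mpr fun t => (hg'' t).continuousAt
    have hr1 : ContinuousOn (fun x : ℝ => x ^ μ) (Ioc 0 1) := fun x hx =>
      (Real.continuousAt_rpow_const x μ (Or.inl hx.1.ne')).continuousWithinAt
    have hr2 : ContinuousOn (fun x : ℝ => x ^ (μ-1)) (Ioc 0 1) := fun x hx =>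
      (Real.continuousAt_rpow_const x (μ-1) (Or.inl hx.1.ne')).continuousWithinAt
    exact (((continuous_const.mul (hg'c.comp (continuous_mul_left ε))).continuousOn.mul
        hr1).add ((continuous_const.mul ((hgc.comp (continuous_mul_left ε)).sub
        continuous_const)).continuousOn.mul hr2))

/-- Under the Hypothesis (`μ = γ - α < 0`, `g ∈ C_b²`,
`sup_{t∈[0,1]}|g(εt) - 1| → 0`), the family `{𝒦^ε}_{ε∈(0,1]}` is uniformly bounded
(equicontinuous) from `C^{α-Hld}([0,1])` to `C^{γ-Hld}([0,1])`, and for each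
`f ∈ C^{α-Hld}`, `𝒦^ε f → 𝒦_0 f` in `C^{γ-Hld}` as `ε → 0` (both `𝒦^ε f` and
`𝒦_0 f` vanish at `0`, so `γ`-Hölder-seminorm convergence is norm convergence). -/
theorem scaled_fractional_operator_equicontinuous_and_converges
    (α γ μ : ℝ) (hα : α ∈ Ioo (0:ℝ) 1) (hγ : γ ∈ Ioo (0:ℝ) 1)
    (hμdef : μ = γ - α) (hμ : μ < 0)
    (g g' g'' : ℝ → ℝ) (Cg : ℝ)
    (hg' : ∀ t, HasDerivAt g (g' t) t) (hg'' : ∀ t, HasDerivAt g' (g'' t) t)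
    (hgb : ∀ t, |g t| ≤ Cg ∧ |g' t| ≤ Cg ∧ |g'' t| ≤ Cg)
    (hg1 : ∀ η > (0:ℝ), ∃ ε₀ > (0:ℝ), ∀ ε ∈ Ioo (0:ℝ) ε₀, ∀ t ∈ Icc (0:ℝ) 1,
      |g (ε * t) - 1| ≤ η)
    (κ : ℝ → ℝ) (hκ : ∀ t, κ t = g t * t ^ μ)
    (dκ : ℝ → ℝ → ℝ)
    (hdκ : ∀ ε ∈ Ioc (0:ℝ) 1, ∀ t ∈ Ioc (0:ℝ) 1,
      HasDerivAt (fun u => κ (ε * u)) (dκ ε t) t) :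
    (∃ C > (0:ℝ), ∀ ε ∈ Ioc (0:ℝ) 1, ∀ (f : ℝ → ℝ) (Cf : ℝ),
      (∀ s ∈ Icc (0:ℝ) 1, ∀ t ∈ Icc (0:ℝ) 1, |f t - f s| ≤ Cf * |t - s| ^ α) →
      ∀ s ∈ Icc (0:ℝ) 1, ∀ t ∈ Icc (0:ℝ) 1,
        |Kop μ κ dκ ε f t - Kop μ κ dκ ε f s| ≤ C * Cf * |t - s| ^ γ) ∧
    (∀ (f : ℝ → ℝ) (Cf : ℝ),
      (∀ s ∈ Icc (0:ℝ) 1, ∀ t ∈ Icc (0:ℝ) 1, |f t - f s| ≤ Cf * |t - s| ^ α) →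
      ∀ η > (0:ℝ), ∃ ε₀ > (0:ℝ), ∀ ε ∈ Ioc (0:ℝ) ε₀, ε ≤ 1 →
        ∀ s ∈ Icc (0:ℝ) 1, ∀ t ∈ Icc (0:ℝ) 1,
          |(Kop μ κ dκ ε f t - K0op μ f t) - (Kop μ κ dκ ε f s - K0op μ f s)| ≤
            η * |t - s| ^ γ) := by
  obtain ⟨hα0, hα1⟩ := hα
  obtain ⟨hγ0, hγ1⟩ := hγ
  have hμ1 : -μ ≤ 1 := by rw [hμdef]; linarith
  have hCg : 0 ≤ Cg := (abs_nonneg _).trans (hgb 0).1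
  set C0 : ℝ := 3 + 3/γ + 1/(1-γ) + 1/(-μ) with hC0
  have hC0pos : 0 < C0 := by
    have p1 : 0 < 3/γ := by positivity
    have p2 : 0 < 1/(1-γ) := by rw [one_div]; exact inv_pos.mpr (by linarith)
    have p3 : 0 < 1/(-μ) := by rw [one_div]; exact inv_pos.mpr (by linarith)
    rw [hC0]; linarith
  have hgb' : ∀ t, |g' t| ≤ Cg := fun t => (hgb t).2.1
  have hgb'' : ∀ t, |g'' t| ≤ Cg := fun t => (hgb t).2.2
  constructor
  · -- equicontinuity
    refine ⟨C0 * (6*Cg) + 1, by nlinarith, ?_⟩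
    intro ε hε f Cf hf s hs t ht
    have hCf : 0 ≤ Cf := by
      have h01 := hf 0 (by norm_num) 1 (by norm_num)
      simp at h01
      exact (abs_nonneg _).trans h01
    obtain ⟨V1, V2, V3, V4, V5⟩ := verif (μ := μ) hμ hμ1 hg' hg'' hgb' hgb''
      hε (c := 0) (A := Cg) hCg (fun x _ => by simpa using (hgb (ε*x)).1)
    simp only [sub_zero] at V1 V2 V3 V4 V5
    have key := masterFull ⟨hα0, hα1⟩ ⟨hγ0, hγ1⟩ hμdef hμ
      (M := 3*(ε*Cg + Cg)) (by have := mul_nonneg hε.1.le hCg; linarith) hCf V1 V2 V3 V4 V5 hf s hs t ht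
    rw [Kop_eq hμ hκ hg' hdκ hε f ht, Kop_eq hμ hκ hg' hdκ hε f hs]
    refine key.trans ?_
    have hM6 : 3*(ε*Cg + Cg) ≤ 6*Cg := by nlinarith [hε.2, hε.1.le]
    have hX : 0 ≤ |t - s| ^ γ := Real.rpow_nonneg (abs_nonneg _) γ
    calc C0 * (3*(ε*Cg + Cg) * Cf) * |t - s| ^ γ
        = (C0 * (3*(ε*Cg + Cg))) * (Cf * |t - s| ^ γ) := by ring
      _ ≤ (C0 * (6*Cg)) * (Cf * |t - s| ^ γ) := by
          apply mul_le_mul_of_nonneg_right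
            (mul_le_mul_of_nonneg_left hM6 hC0pos.le) (mul_nonneg hCf hX)
      _ ≤ (C0 * (6*Cg) + 1) * (Cf * |t - s| ^ γ) := by
          apply mul_le_mul_of_nonneg_right (by linarith) (mul_nonneg hCf hX)
      _ = (C0 * (6*Cg) + 1) * Cf * |t - s| ^ γ := by ring
  · -- convergence
    intro f Cf hf η hη
    have hCf : 0 ≤ Cf := by
      have h01 := hf 0 (by norm_num) 1 (by norm_num)
      simp at h01
      exact (abs_nonneg _).trans h01
    have h6pos : 0 < 6*C0*(Cf+1) := by nlinarith
    set δ : ℝ := η / (6*C0*(Cf+1)) with hδ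
    have hδpos : 0 < δ := div_pos hη h6pos
    obtain ⟨ε₁, hε₁pos, hg1'⟩ := hg1 δ hδpos
    refine ⟨min (ε₁/2) (δ/(Cg+1)), by positivity, ?_⟩
    intro ε hεIoc hεle1 s hs t ht
    have hε0 : 0 < ε := hεIoc.1
    have hεε₁ : ε < ε₁ := lt_of_le_of_lt (hεIoc.2.trans (min_le_left _ _)) (by linarith)
    have hεδ : ε * Cg ≤ δ := by
      have h1 : ε ≤ δ/(Cg+1) := hεIoc.2.trans (min_le_right _ _)
      rw [le_div_iff₀ (by positivity)] at h1
      nlinarith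
    have hεIoc1 : ε ∈ Ioc (0:ℝ) 1 := ⟨hε0, hεle1⟩
    have hfc : ContinuousOn f (Icc 0 1) := holder_continuousOn hα0 hf
    -- bounds for the difference kernel
    obtain ⟨V1, V2, V3, V4, V5⟩ := verif (μ := μ) hμ hμ1 hg' hg'' hgb' hgb''
      hεIoc1 (c := 1) (A := δ) hδpos.le (fun x hx => hg1' ε ⟨hε0, hεε₁⟩ x hx)
    -- bounds for the scaled kernel (for integrability)
    obtain ⟨W1, W2, W3, W4, W5⟩ := verif (μ := μ) hμ hμ1 hg' hg'' hgb' hgb''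
      hεIoc1 (c := 0) (A := Cg) hCg (fun x _ => by simpa using (hgb (ε*x)).1)
    simp only [sub_zero] at W3 W5
    have hk0b : ∀ x ∈ Ioc (0:ℝ) 1, |μ * x ^ (μ-1)| ≤ 1 * x ^ (μ-1) := by
      intro x hx
      rw [abs_mul, abs_of_neg hμ, abs_of_nonneg (Real.rpow_nonneg hx.1.le _)]
      exact mul_le_mul_of_nonneg_right hμ1 (Real.rpow_nonneg hx.1.le _)
    have hk0c : ContinuousOn (fun x : ℝ => μ * x ^ (μ-1)) (Ioc 0 1) :=
      continuousOn_const.mul (fun x hx =>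
        (Real.continuousAt_rpow_const x (μ-1) (Or.inl hx.1.ne')).continuousWithinAt)
    have hkeq : (fun x => (ε * g' (ε*x) * x ^ μ + μ * g (ε*x) * x ^ (μ-1))
        - μ * x ^ (μ-1)) = fun x => ε * g' (ε*x) * x ^ μ + μ * (g (ε*x) - 1) * x ^ (μ-1) :=
      funext fun x => by ring
    have hdiff : ∀ r, r ∈ Icc (0:ℝ) 1 → Kop μ κ dκ ε f r - K0op μ f r
        = TopK μ (fun u => g (ε*u) - 1)
            (fun x => ε * g' (ε*x) * x ^ μ + μ * (g (ε*x) - 1) * x ^ (μ-1)) f r := by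
      intro r hr
      rw [Kop_eq hμ hκ hg' hdκ hεIoc1 f hr, K0op_eq, ← hkeq]
      exact TopK_sub (integrable_main hγ0 hμdef hCf W3 W5 hfc hf hr)
        (integrable_main hγ0 hμdef hCf hk0b hk0c hfc hf hr)
    have key := masterFull ⟨hα0, hα1⟩ ⟨hγ0, hγ1⟩ hμdef hμ
      (M := 3*(ε*Cg + δ)) (by have := mul_nonneg hε0.le hCg; linarith) hCf V1 V2 V3 V4 V5 hf s hs t ht
    rw [hdiff t ht, hdiff s hs]
    refine key.trans ?_
    have hX : 0 ≤ |t - s| ^ γ := Real.rpow_nonneg (abs_nonneg _) γ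
    have hcoef : C0 * (3*(ε*Cg + δ) * Cf) ≤ η := by
      have h1 : C0 * (3*(ε*Cg + δ) * Cf) ≤ C0 * (6*δ*Cf) := by
        apply mul_le_mul_of_nonneg_left _ hC0pos.le
        apply mul_le_mul_of_nonneg_right _ hCf
        linarith
      have h2 : C0 * (6*δ*Cf) = η * (Cf/(Cf+1)) := by
        rw [hδ]; field_simp
      have h3 : η * (Cf/(Cf+1)) ≤ η * 1 := by
        apply mul_le_mul_of_nonneg_left _ hη.le
        rw [div_le_one (by linarith)]
        linarith
      rw [mul_one] at h3
      linarith [h1, h2 ▸ h3]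
    calc C0 * (3*(ε*Cg + δ) * Cf) * |t - s| ^ γ
        ≤ η * |t - s| ^ γ := mul_le_mul_of_nonneg_right hcoef hX
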